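/- A nonabelian free group is not an algebraic group in the following sense: there exist elements g, x of the free group F on two generators such that the subgroup generated by all iterated commutators [x, g], [[x,g],g], [[[x,g],g],g], ... is not finitely generated. -/

import Mathlib

open scoped commutatorElement

/-- Iterated commutators: `itComm x g 0 = ⁅x, g⁆`, `itComm x g (n+1) = ⁅itComm x g n, g⁆`. -/
def itComm {G : Type*} [Group G] (x g : G) : ℕ → G :=
  fun n => (fun c => ⁅c, g⁆)^[n] ⁅x, g⁆

noncomputable section FGAux

open AddMonoidAlgebra Multiplicative

/-- Laurent polynomials over ℤ. -/
abbrev RR : Type := AddMonoidAlgebra ℤ ℤ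

def tt : RR := AddMonoidAlgebra.single (1 : ℤ) (1 : ℤ)

def ttinv : RR := AddMonoidAlgebra.single (-1 : ℤ) (1 : ℤ)

lemma tt_mul_ttinv : tt * ttinv = 1 := by
  rw [tt, ttinv, AddMonoidAlgebra.single_mul_single]
  norm_num [AddMonoidAlgebra.one_def]

lemma ttinv_mul_tt : ttinv * tt = 1 := by
  rw [tt, ttinv, AddMonoidAlgebra.single_mul_single]
  norm_num [AddMonoidAlgebra.one_def]

/-- Multiplication by `t` as a permutation of `RR`. -/
def gPerm : Equiv.Perm RR where
  toFun := fun p => tt * p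
  invFun := fun p => ttinv * p
  left_inv := fun p => by
    show ttinv * (tt * p) = p
    rw [← mul_assoc, ttinv_mul_tt, one_mul]
  right_inv := fun p => by
    show tt * (ttinv * p) = p
    rw [← mul_assoc, tt_mul_ttinv, one_mul]

/-- Translations as permutations of `RR`. -/
def ψ : Multiplicative RR →* Equiv.Perm RR where
  toFun := fun p => Equiv.addRight (Multiplicative.toAdd p)
  map_one' := by ext x; simp
  map_mul' := fun p q => by
    ext x
    simp only [Equiv.coe_addRight, Equiv.Perm.mul_apply, toAdd_mul]
    ring

lemma ψ_apply (p : RR) (x : RR) : ψ (ofAdd p) x = x + p := rfl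

lemma ψ_injective : Function.Injective ψ := by
  intro p q h
  have := congrArg (fun e : Equiv.Perm RR => e 0) h
  simpa [ψ] using this

lemma gPerm_apply (x : RR) : gPerm x = tt * x := rfl

lemma gPerm_inv_apply (x : RR) : gPerm⁻¹ x = ttinv * x := rfl

lemma comm_eq (p : RR) :
    ⁅ψ (ofAdd p), gPerm⁆ = ψ (ofAdd ((1 - tt) * p)) := by
  have hinv : (ψ (ofAdd p))⁻¹ = ψ (ofAdd (-p)) := by
    rw [← map_inv, ← ofAdd_neg]
  refine Equiv.ext fun x => ?_
  rw [commutatorElement_def]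
  simp only [Equiv.Perm.mul_apply, hinv, ψ_apply, gPerm_apply, gPerm_inv_apply]
  rw [mul_add, ← mul_assoc, tt_mul_ttinv, one_mul]
  ring

lemma itComm_eq (n : ℕ) :
    itComm (ψ (ofAdd 1)) gPerm n = ψ (ofAdd ((1 - tt) ^ (n + 1))) := by
  induction n with
  | zero =>
    show ⁅ψ (ofAdd 1), gPerm⁆ = _
    rw [comm_eq, mul_one, pow_one]
  | succ n ih =>
    show (fun c => ⁅c, gPerm⁆)^[n + 1] ⁅ψ (ofAdd 1), gPerm⁆ = _
    rw [Function.iterate_succ_apply']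
    have : (fun c => ⁅c, gPerm⁆)^[n] ⁅ψ (ofAdd 1), gPerm⁆ = itComm (ψ (ofAdd 1)) gPerm n := rfl
    rw [this, ih, comm_eq, ← pow_succ']

lemma tt_mul_apply (p : RR) (k : ℤ) : (tt * p).coeff k = p.coeff (k - 1) := by
  rw [tt, AddMonoidAlgebra.coeff_single_mul_apply, one_mul]
  ring_nf

lemma one_sub_tt_mul_apply (p : RR) (k : ℤ) : ((1 - tt) * p).coeff k = p.coeff k - p.coeff (k - 1) := by
  rw [sub_mul, one_mul, AddMonoidAlgebra.coeff_sub, Finsupp.sub_apply, tt_mul_apply]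

lemma pow_apply_eq_zero : ∀ (n : ℕ) (k : ℤ), (n : ℤ) < k → ((1 - tt) ^ n : RR).coeff k = 0 := by
  intro n
  induction n with
  | zero =>
    intro k hk
    rw [pow_zero, AddMonoidAlgebra.one_def]
    exact Finsupp.single_eq_of_ne (by omega)
  | succ n ih =>
    intro k hk
    rw [pow_succ', one_sub_tt_mul_apply, ih k (by push_cast at hk ⊢; omega),
      ih (k - 1) (by push_cast at hk ⊢; omega), sub_zero]

lemma pow_apply_diag : ∀ n : ℕ, ((1 - tt) ^ n : RR).coeff (n : ℤ) = (-1) ^ n := by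
  intro n
  induction n with
  | zero =>
    rw [pow_zero, pow_zero, AddMonoidAlgebra.one_def]
    exact Finsupp.single_eq_same
  | succ n ih =>
    rw [pow_succ', one_sub_tt_mul_apply]
    have h1 : ((1 - tt) ^ n : RR).coeff ((n : ℕ) + 1 : ℤ) = 0 :=
      pow_apply_eq_zero n _ (by omega)
    have h2 : (((n : ℕ) + 1 : ℤ) - 1) = (n : ℤ) := by ring
    push_cast
    push_cast at h1
    rw [h1, h2, ih]
    ring

/-- The coefficient-extraction additive homomorphism. -/
def coeffHom (k : ℤ) : RR →+ ℤ where
  toFun := fun p => p.coeff k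
  map_zero' := rfl
  map_add' := fun p q => Finsupp.add_apply p.coeff q.coeff k

/-- The subgroup generated by the `(1-t)^(n+1)` is not finitely generated. -/
lemma not_fg_closure :
    ¬ (Subgroup.closure
        (Set.range fun n : ℕ => ofAdd ((1 - tt) ^ (n + 1) : RR))).FG := by
  rintro ⟨F, hF⟩
  set N : ℕ := F.sup fun f => (Multiplicative.toAdd f).coeff.support.sup fun k => k.natAbs with hN
  set E : Multiplicative RR →* Multiplicative ℤ :=
    AddMonoidHom.toMultiplicative (coeffHom ((N : ℤ) + 1)) with hE
  have hker : ∀ f ∈ F, f ∈ E.ker := by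
    intro f hf
    have hcoeff : (Multiplicative.toAdd f).coeff ((N : ℤ) + 1) = 0 := by
      by_contra h
      have hmem : ((N : ℤ) + 1) ∈ (Multiplicative.toAdd f).coeff.support := Finsupp.mem_support_iff.2 h
      have h1 : ((N : ℤ) + 1).natAbs ≤ (Multiplicative.toAdd f).coeff.support.sup (fun k => k.natAbs) :=
        Finset.le_sup hmem
      have h2 : (Multiplicative.toAdd f).coeff.support.sup (fun k => k.natAbs) ≤ N :=
        Finset.le_sup (f := fun f => (Multiplicative.toAdd f).coeff.support.sup fun k => k.natAbs) hf
      omega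
    show E f = 1
    simp only [hE, AddMonoidHom.toMultiplicative_apply_apply]
    rw [show (coeffHom ((N : ℤ) + 1)) (Multiplicative.toAdd f) = 0 from hcoeff]
    rfl
  have hle : Subgroup.closure (Set.range fun n : ℕ => ofAdd ((1 - tt) ^ (n + 1) : RR)) ≤ E.ker := by
    rw [← hF]
    exact (Subgroup.closure_le _).2 hker
  have hmem : ofAdd ((1 - tt) ^ (N + 1) : RR) ∈
      Subgroup.closure (Set.range fun n : ℕ => ofAdd ((1 - tt) ^ (n + 1) : RR)) :=
    Subgroup.subset_closure ⟨N, rfl⟩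
  have hone := hle hmem
  rw [MonoidHom.mem_ker] at hone
  have : ((1 - tt) ^ (N + 1) : RR).coeff ((N : ℤ) + 1) = 0 := by
    have := congrArg Multiplicative.toAdd hone
    simp [hE, coeffHom] at this
    exact this
  rw [show ((N : ℤ) + 1) = ((N + 1 : ℕ) : ℤ) by push_cast; ring, pow_apply_diag (N + 1)] at this
  have : ((-1 : ℤ)) ^ (N + 1) ≠ 0 := pow_ne_zero _ (by norm_num)
  omega

lemma subgroup_fg_map {G N : Type*} [Group G] [Group N] {H : Subgroup G} (h : H.FG)
    (f : G →* N) : (H.map f).FG := by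
  obtain ⟨F, hF⟩ := h
  rw [Subgroup.fg_iff]
  exact ⟨f '' ↑F, by rw [← MonoidHom.map_closure, hF], F.finite_toSet.image f⟩

lemma subgroup_fg_of_map_fg {G N : Type*} [Group G] [Group N] (f : G →* N)
    (hf : Function.Injective f) {H : Subgroup G} (h : (H.map f).FG) : H.FG := by
  obtain ⟨F, hF⟩ := h
  have hsub : (F : Set N) ⊆ f '' ↑H := by
    intro y hy
    have : y ∈ H.map f := hF ▸ Subgroup.subset_closure hy
    exact this
  set S : Set G := f ⁻¹' ↑F ∩ ↑H with hS
  have hfin : S.Finite :=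
    Set.Finite.subset (F.finite_toSet.preimage hf.injOn) Set.inter_subset_left
  have himg : f '' S = ↑F := by
    apply Set.Subset.antisymm
    · rintro y ⟨x, ⟨hx1, _⟩, rfl⟩; exact hx1
    · intro y hy
      obtain ⟨x, hxH, rfl⟩ := hsub hy
      exact ⟨x, ⟨hy, hxH⟩, rfl⟩
  have hmap : (Subgroup.closure S).map f = H.map f := by
    rw [MonoidHom.map_closure, himg, hF]
  exact (Subgroup.fg_iff _).2 ⟨S, Subgroup.map_injective hf hmap, hfin⟩

lemma map_itComm {G N : Type*} [Group G] [Group N] (f : G →* N) (x g : G) :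
    ∀ n : ℕ, f (itComm x g n) = itComm (f x) (f g) n := by
  intro n
  induction n with
  | zero => exact map_commutatorElement f x g
  | succ n ih =>
    show f ((fun c => ⁅c, g⁆)^[n + 1] ⁅x, g⁆) = (fun c => ⁅c, f g⁆)^[n + 1] ⁅f x, f g⁆
    rw [Function.iterate_succ_apply', Function.iterate_succ_apply']
    rw [map_commutatorElement]
    have : f ((fun c => ⁅c, g⁆)^[n] ⁅x, g⁆) = (fun c => ⁅c, f g⁆)^[n] ⁅f x, f g⁆ := ih
    rw [this]

end FGAux

/-- A nonabelian free group is not algebraic. -/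
theorem free_group_not_algebraic :
    ∃ g x : FreeGroup Bool,
      ¬ (Subgroup.closure (Set.range (itComm x g))).FG := by
  refine ⟨FreeGroup.of true, FreeGroup.of false, ?_⟩
  intro hFG
  set Φ : FreeGroup Bool →* Equiv.Perm RR :=
    FreeGroup.lift (fun b => if b then gPerm else ψ (Multiplicative.ofAdd 1)) with hΦ
  have hΦg : Φ (FreeGroup.of true) = gPerm := by simp [hΦ]
  have hΦx : Φ (FreeGroup.of false) = ψ (Multiplicative.ofAdd 1) := by simp [hΦ]
  have h1 := subgroup_fg_map hFG Φ
  have hrange : Φ '' Set.range (itComm (FreeGroup.of false) (FreeGroup.of true))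
      = ψ '' Set.range (fun n : ℕ => Multiplicative.ofAdd ((1 - tt) ^ (n + 1) : RR)) := by
    rw [← Set.range_comp, ← Set.range_comp]
    refine congrArg Set.range (funext fun n => ?_)
    show Φ (itComm (FreeGroup.of false) (FreeGroup.of true) n) = _
    rw [map_itComm, hΦg, hΦx, itComm_eq]
    rfl
  rw [MonoidHom.map_closure, hrange, ← MonoidHom.map_closure] at h1
  exact not_fg_closure (subgroup_fg_of_map_fg ψ ψ_injective h1)
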